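/- arXiv:2007.12815 — 6 statements merged into one kernel-verified Lean document; each statement's English description precedes it below -/
import Mathlib

section
/- Let n1, n2 be positive integers, W an n1 × n2 real matrix, b¹ ∈ ℝ^{n1}, b² ∈ ℝ^{n2}, and let the Restricted Boltzmann Machine (RBM) distribution on pairs (x,h) ∈ {±1}^{n1} × {±1}^{n2} be defined by Pr(X = x, H = h) = exp(⟨x, W h⟩ + ⟨b¹, x⟩ + ⟨b², h⟩)/Z, where Z is the normalizing constant. Then for every visible index i ∈ [n1] and every assignment x ∈ {±1}^{n1} of the visible units, the conditional expectation of X_i given X_k = x_k for all k ≠ i equals tanh( b¹_i + Σ_{j=1}^{n2} arctanh( tanh(W_{ij}) · tanh( b²_j + Σ_{k ≠ i} W_{kj} x_k ) ) ). -/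
open Finset Real

/-- `arctanh x = (1/2) log((1+x)/(1-x))`, the inverse hyperbolic tangent. -/
noncomputable def arctanh (x : ℝ) : ℝ := (1 / 2) * Real.log ((1 + x) / (1 - x))

/-- Map a boolean spin to `±1`. -/
def spin (b : Bool) : ℝ := if b then 1 else -1

/-- Energy (negative) of a configuration of the RBM:
`⟨x, W h⟩ + ⟨b¹, x⟩ + ⟨b², h⟩`. -/
def rbmWeight {n1 n2 : ℕ} (W : Fin n1 → Fin n2 → ℝ) (b1 : Fin n1 → ℝ)
    (b2 : Fin n2 → ℝ) (x : Fin n1 → ℝ) (h : Fin n2 → ℝ) : ℝ :=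
  (∑ i, ∑ j, x i * W i j * h j) + (∑ i, b1 i * x i) + (∑ j, b2 j * h j)

lemma exp_two_arctanh (w u : ℝ) :
    Real.exp (2 * arctanh (Real.tanh w * Real.tanh u)) =
      Real.cosh (w + u) / Real.cosh (u - w) := by
  have hw := Real.cosh_pos w
  have hu := Real.cosh_pos u
  have huw := Real.cosh_pos (u - w)
  have h1 : 1 + Real.tanh w * Real.tanh u
      = Real.cosh (w + u) / (Real.cosh w * Real.cosh u) := by
    rw [Real.cosh_add, Real.tanh_eq_sinh_div_cosh, Real.tanh_eq_sinh_div_cosh]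
    field_simp
  have h2 : 1 - Real.tanh w * Real.tanh u
      = Real.cosh (u - w) / (Real.cosh w * Real.cosh u) := by
    rw [Real.cosh_sub, Real.tanh_eq_sinh_div_cosh, Real.tanh_eq_sinh_div_cosh]
    field_simp
  have hr : (1 + Real.tanh w * Real.tanh u) / (1 - Real.tanh w * Real.tanh u)
      = Real.cosh (w + u) / Real.cosh (u - w) := by
    rw [h1, h2]
    field_simp
  have hrpos : 0 < (1 + Real.tanh w * Real.tanh u) / (1 - Real.tanh w * Real.tanh u) := by
    rw [hr]; positivity
  unfold arctanh
  rw [show (2 : ℝ) * (1 / 2 * Real.log ((1 + Real.tanh w * Real.tanh u) /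
      (1 - Real.tanh w * Real.tanh u))) = Real.log ((1 + Real.tanh w * Real.tanh u) /
      (1 - Real.tanh w * Real.tanh u)) by ring]
  rw [Real.exp_log hrpos, hr]

lemma tanh_eq_ratio (y A B : ℝ) (hA : 0 < A) (hB : 0 < B)
    (h : Real.exp (2 * y) = A / B) : (A - B) / (A + B) = Real.tanh y := by
  have hE : (0:ℝ) < Real.exp y := Real.exp_pos y
  have h2 : Real.exp y * Real.exp y * B = A := by
    rw [← Real.exp_add, show y + y = 2 * y by ring, h]
    field_simp
  rw [Real.tanh_eq_sinh_div_cosh, Real.sinh_eq, Real.cosh_eq, Real.exp_neg]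
  have hAB : 0 < A + B := by linarith
  have hEE : (0:ℝ) < Real.exp y + (Real.exp y)⁻¹ := by positivity
  field_simp
  ring_nf
  nlinarith [h2, hE, hB]

lemma sum_pi_bool {n : ℕ} (a : Fin n → ℝ) :
    ∑ ε : Fin n → Bool, ∏ j, Real.exp (spin (ε j) * a j)
      = ∏ j, (Real.exp (a j) + Real.exp (-(a j))) := by
  have := Finset.prod_univ_sum (fun _ : Fin n => (Finset.univ : Finset Bool))
    (fun j b => Real.exp (spin b * a j))
  rw [Fintype.piFinset_univ] at this
  rw [← this]
  exact Finset.prod_congr rfl fun j _ => by simp [spin, Fintype.sum_bool]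

lemma rbmWeight_update {n1 n2 : ℕ} (W : Fin n1 → Fin n2 → ℝ) (b1 : Fin n1 → ℝ)
    (b2 : Fin n2 → ℝ) (x : Fin n1 → ℝ) (i : Fin n1) (v : ℝ) (h : Fin n2 → ℝ) :
    rbmWeight W b1 b2 (Function.update x i v) h =
      ((∑ k ∈ Finset.univ.erase i, b1 k * x k) + v * b1 i)
        + ∑ j, h j * (v * W i j + (b2 j + ∑ k ∈ Finset.univ.erase i, W k j * x k)) := by
  unfold rbmWeight
  rw [← Finset.sum_erase_add _ _ (Finset.mem_univ i),
      ← Finset.sum_erase_add (f := fun k => b1 k * Function.update x i v k) _ (Finset.mem_univ i)]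
  simp only [Function.update_self]
  have c1 : (∑ k ∈ Finset.univ.erase i, ∑ j, Function.update x i v k * W k j * h j)
      = ∑ k ∈ Finset.univ.erase i, ∑ j, x k * W k j * h j :=
    Finset.sum_congr rfl fun k hk => by
      rw [Function.update_of_ne (Finset.ne_of_mem_erase hk)]
  have c2 : (∑ k ∈ Finset.univ.erase i, b1 k * Function.update x i v k)
      = ∑ k ∈ Finset.univ.erase i, b1 k * x k :=
    Finset.sum_congr rfl fun k hk => by
      rw [Function.update_of_ne (Finset.ne_of_mem_erase hk)]
  rw [c1, c2]
  have e3 : ∑ j, h j * ∑ k ∈ Finset.univ.erase i, W k j * x k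
      = ∑ k ∈ Finset.univ.erase i, ∑ j, x k * W k j * h j := by
    simp_rw [Finset.mul_sum]
    rw [Finset.sum_comm]
    exact Finset.sum_congr rfl fun k _ => Finset.sum_congr rfl fun j _ => by ring
  have e1 : (∑ j, h j * (v * W i j)) = ∑ j, v * W i j * h j :=
    Finset.sum_congr rfl fun j _ => by ring
  have e2 : (∑ j, h j * b2 j) = ∑ j, b2 j * h j :=
    Finset.sum_congr rfl fun j _ => by ring
  simp only [mul_add, Finset.sum_add_distrib, e3, e1, e2]
  ring

/-- **Theorem (RBM node prediction).** For any visible unit `i` of an arbitrary RBM and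
any assignment `x` of the visible spins, the conditional expectation of `X i` given
`X k = x k` for `k ≠ i` equals
`tanh (b¹ i + ∑ j, arctanh (tanh (W i j) * tanh (b² j + ∑_{k ≠ i} W k j * x k)))`. -/
theorem rbm_node_prediction {n1 n2 : ℕ} (hn1 : 0 < n1) (hn2 : 0 < n2)
    (W : Fin n1 → Fin n2 → ℝ) (b1 : Fin n1 → ℝ) (b2 : Fin n2 → ℝ)
    (i : Fin n1) (x : Fin n1 → ℝ) (hx : ∀ k, x k = 1 ∨ x k = -1) :
    (∑ s : Bool, ∑ ε : Fin n2 → Bool,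
        spin s *
          Real.exp (rbmWeight W b1 b2 (Function.update x i (spin s)) (fun j => spin (ε j)))) /
      (∑ s : Bool, ∑ ε : Fin n2 → Bool,
        Real.exp (rbmWeight W b1 b2 (Function.update x i (spin s)) (fun j => spin (ε j)))) =
    Real.tanh (b1 i + ∑ j,
      arctanh (Real.tanh (W i j) *
        Real.tanh (b2 j + ∑ k ∈ Finset.univ.erase i, W k j * x k))) := by
  classical
  set u : Fin n2 → ℝ := fun j => b2 j + ∑ k ∈ Finset.univ.erase i, W k j * x k with hu
  set C : ℝ := ∑ k ∈ Finset.univ.erase i, b1 k * x k with hC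
  -- sum over hidden layer for a fixed visible value v
  have hsum : ∀ v : ℝ,
      (∑ ε : Fin n2 → Bool,
        Real.exp (rbmWeight W b1 b2 (Function.update x i v) (fun j => spin (ε j))))
      = Real.exp C * (Real.exp (v * b1 i)
          * ∏ j, (Real.exp (v * W i j + u j) + Real.exp (-(v * W i j + u j)))) := by
    intro v
    have hterm : ∀ ε : Fin n2 → Bool,
        Real.exp (rbmWeight W b1 b2 (Function.update x i v) (fun j => spin (ε j)))
        = Real.exp C * (Real.exp (v * b1 i)
            * ∏ j, Real.exp (spin (ε j) * (v * W i j + u j))) := by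
      intro ε
      rw [rbmWeight_update, Real.exp_add, Real.exp_add, mul_assoc]
      have h1 : Real.exp (∑ k ∈ Finset.univ.erase i, b1 k * x k) = Real.exp C := rfl
      have h2 : Real.exp (∑ j, spin (ε j) *
            (v * W i j + (b2 j + ∑ k ∈ Finset.univ.erase i, W k j * x k)))
          = ∏ j, Real.exp (spin (ε j) * (v * W i j + u j)) := Real.exp_sum _ _
      rw [h1, h2]
    calc (∑ ε : Fin n2 → Bool,
          Real.exp (rbmWeight W b1 b2 (Function.update x i v) (fun j => spin (ε j))))
        = ∑ ε : Fin n2 → Bool, Real.exp C * (Real.exp (v * b1 i)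
            * ∏ j, Real.exp (spin (ε j) * (v * W i j + u j))) :=
          Finset.sum_congr rfl fun ε _ => hterm ε
      _ = Real.exp C * (Real.exp (v * b1 i)
            * ∑ ε : Fin n2 → Bool, ∏ j, Real.exp (spin (ε j) * (v * W i j + u j))) := by
          rw [← Finset.mul_sum, ← Finset.mul_sum]
      _ = _ := by rw [sum_pi_bool]
  -- the two key quantities
  set A : ℝ := Real.exp (b1 i) * ∏ j, (Real.exp (W i j + u j) + Real.exp (-(W i j + u j)))
    with hA
  set B : ℝ := Real.exp (-b1 i) * ∏ j, (Real.exp (u j - W i j) + Real.exp (-(u j - W i j)))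
    with hB
  have hApos : 0 < A := by rw [hA]; positivity
  have hBpos : 0 < B := by rw [hB]; positivity
  have hsum1 : (∑ ε : Fin n2 → Bool,
      Real.exp (rbmWeight W b1 b2 (Function.update x i 1) (fun j => spin (ε j))))
      = Real.exp C * A := by
    rw [hsum 1, hA]
    simp only [one_mul]
  have hsumneg : (∑ ε : Fin n2 → Bool,
      Real.exp (rbmWeight W b1 b2 (Function.update x i (-1)) (fun j => spin (ε j))))
      = Real.exp C * B := by
    rw [hsum (-1), hB]
    congr 1
    congr 1
    · rw [neg_one_mul]
    · exact Finset.prod_congr rfl fun j _ => by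
        rw [show (-1:ℝ) * W i j + u j = u j - W i j by ring]
  -- key exponential identity
  have key : Real.exp (2 * (b1 i + ∑ j, arctanh (Real.tanh (W i j) * Real.tanh (u j))))
      = A / B := by
    rw [mul_add, Real.exp_add, Finset.mul_sum, Real.exp_sum]
    have hprod : (∏ j, Real.exp (2 * arctanh (Real.tanh (W i j) * Real.tanh (u j))))
        = ∏ j, Real.cosh (W i j + u j) / Real.cosh (u j - W i j) :=
      Finset.prod_congr rfl fun j _ => exp_two_arctanh _ _
    rw [hprod, Finset.prod_div_distrib]
    have hcosh : ∀ a : ℝ, Real.exp a + Real.exp (-a) = 2 * Real.cosh a := fun a => by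
      rw [Real.cosh_eq]; ring
    rw [hA, hB]
    simp only [hcosh]
    rw [Finset.prod_mul_distrib, Finset.prod_mul_distrib, Finset.prod_const]
    have hP1 : 0 < ∏ j, Real.cosh (W i j + u j) := Finset.prod_pos fun j _ => Real.cosh_pos _
    have hP2 : 0 < ∏ j, Real.cosh (u j - W i j) := Finset.prod_pos fun j _ => Real.cosh_pos _
    have he : Real.exp (2 * b1 i) * Real.exp (-b1 i) = Real.exp (b1 i) := by
      rw [← Real.exp_add]; ring_nf
    rw [eq_div_iff (by positivity)]
    simp only [Finset.card_univ, Fintype.card_fin]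
    field_simp
    linear_combination he
  -- put everything together
  have st : spin true = 1 := rfl
  have sf : spin false = -1 := rfl
  simp only [Fintype.sum_bool, st, sf, one_mul, neg_one_mul, Finset.sum_neg_distrib]
  rw [hsum1, hsumneg]
  have hgoal : (Real.exp C * A + -(Real.exp C * B)) / (Real.exp C * A + Real.exp C * B)
      = (A - B) / (A + B) := by
    rw [show Real.exp C * A + -(Real.exp C * B) = Real.exp C * (A - B) by ring,
        show Real.exp C * A + Real.exp C * B = Real.exp C * (A + B) by ring,
        mul_div_mul_left _ _ (Real.exp_ne_zero C)]
  rw [hgoal]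
  exact tanh_eq_ratio _ A B hApos hBpos key
end

section
/- Let T, n be positive integers, u₀, u₁, …, u_T real numbers, and M a T × (n+1) real matrix. For β ∈ (0,1] define f_β(t) := (1/β) arctanh(β tanh(t)) and f₀ := tanh. Then for every x ∈ ℝⁿ, the limit as K → ∞ (over positive integers K) of tanh( u₀ + Σ_{i=1}^{K} Σ_{j=1}^{T} tanh(u_j/K) · f_{|u_j|/K}( M_{j0} + Σ_{k=1}^{n} M_{jk} x_k ) ) exists and equals tanh( u₀ + Σ_{j=1}^{T} u_j · tanh( M_{j0} + Σ_{k=1}^{n} M_{jk} x_k ) ). (For indices j with u_j = 0 the corresponding summand is 0, consistent with tanh(0) = 0.) -/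
open Finset Real Filter

/-- The family of activations `f_β(t) = (1/β) arctanh (β tanh t)` for `β ∈ (0,1]`,
with `f_0 = tanh`. -/
noncomputable def fAct (β : ℝ) (t : ℝ) : ℝ :=
  if β = 0 then Real.tanh t else (1 / β) * arctanh (β * Real.tanh t)

lemma continuous_tanh' : Continuous Real.tanh := by
  have : Real.tanh = fun x => Real.sinh x / Real.cosh x := by
    funext x; exact Real.tanh_eq_sinh_div_cosh x
  rw [this]
  exact Real.continuous_sinh.div Real.continuous_cosh (fun x => (Real.cosh_pos x).ne')

lemma hasDerivAt_tanh_zero : HasDerivAt Real.tanh 1 0 := by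
  have h : HasDerivAt (fun x => Real.sinh x / Real.cosh x)
      ((Real.cosh 0 * Real.cosh 0 - Real.sinh 0 * Real.sinh 0) / Real.cosh 0 ^ 2) 0 :=
    (Real.hasDerivAt_sinh 0).div (Real.hasDerivAt_cosh 0) (Real.cosh_pos 0).ne'
  have h2 : (Real.cosh 0 * Real.cosh 0 - Real.sinh 0 * Real.sinh 0) / Real.cosh 0 ^ 2 = 1 := by
    simp [Real.cosh_zero, Real.sinh_zero]
  rw [h2] at h
  exact h.congr_of_eventuallyEq (Filter.Eventually.of_forall fun x => Real.tanh_eq_sinh_div_cosh x)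

lemma hasDerivAt_arctanh_zero : HasDerivAt arctanh 1 0 := by
  have h1 : HasDerivAt (fun x : ℝ => (1 / 2) * (Real.log (1 + x) - Real.log (1 - x))) 1 0 := by
    have ha : HasDerivAt (fun x : ℝ => 1 + x) 1 0 := by
      simpa using (hasDerivAt_id (0:ℝ)).const_add 1
    have hb : HasDerivAt (fun x : ℝ => 1 - x) (-1) 0 := by
      simpa using (hasDerivAt_id (0:ℝ)).const_sub 1
    have hla : HasDerivAt (fun x : ℝ => Real.log (1 + x)) (1 / (1 + 0)) 0 :=
      ha.log (by norm_num)
    have hlb : HasDerivAt (fun x : ℝ => Real.log (1 - x)) (-1 / (1 - 0)) 0 :=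
      hb.log (by norm_num)
    have := ((hla.sub hlb).const_mul (1/2 : ℝ))
    exact this.congr_deriv (by norm_num)
  refine h1.congr_of_eventuallyEq ?_
  have : Set.Ioo (-(1:ℝ)) 1 ∈ nhds (0:ℝ) := Ioo_mem_nhds (by norm_num) (by norm_num)
  filter_upwards [this] with x hx
  have h1x : (0:ℝ) < 1 + x := by linarith [hx.1]
  have h2x : (0:ℝ) < 1 - x := by linarith [hx.2]
  unfold arctanh
  rw [Real.log_div h1x.ne' h2x.ne']

/-- Key limit: if `g 0 = 0` and `g' 0 = 1` then `K * g (c / K) → c`. -/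
lemma key_lim {g : ℝ → ℝ} (hg : HasDerivAt g 1 0) (hg0 : g 0 = 0) (c : ℝ) :
    Tendsto (fun K : ℕ => (K : ℝ) * g (c / K)) atTop (nhds c) := by
  rcases eq_or_ne c 0 with rfl | hc
  · simpa [hg0] using tendsto_const_nhds (α := ℝ) (x := 0) (f := (atTop : Filter ℕ))
  · have hslope : Tendsto (slope g 0) (nhdsWithin 0 {(0:ℝ)}ᶜ) (nhds 1) :=
      hasDerivAt_iff_tendsto_slope.mp hg
    have hck : Tendsto (fun K : ℕ => c / (K : ℝ)) atTop (nhdsWithin 0 {(0:ℝ)}ᶜ) := by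
      apply tendsto_nhdsWithin_of_tendsto_nhds_of_eventually_within
      · exact tendsto_const_div_atTop_nhds_zero_nat c
      · filter_upwards [eventually_gt_atTop 0] with K hK
        have : (K:ℝ) ≠ 0 := Nat.cast_ne_zero.mpr hK.ne'
        exact div_ne_zero hc this
    have h := (hslope.comp hck).const_mul c
    rw [mul_one] at h
    refine h.congr' ?_
    filter_upwards [eventually_gt_atTop 0] with K hK
    have hK0 : (K:ℝ) ≠ 0 := Nat.cast_ne_zero.mpr hK.ne'
    have hy : c / (K:ℝ) ≠ 0 := div_ne_zero hc hK0
    simp only [Function.comp_apply, slope_def_field, div_sub_div_same]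
    rw [hg0, sub_zero, sub_zero]
    field_simp

/-- **Lemma (2-layer tanh networks as limits of RBM prediction functions).**
For any 2-layer tanh network with outer bias `u₀`, outer weights `u j`, inner biases
`M j 0` and inner weights `M j (k+1)`, and any input `x ∈ ℝⁿ`, we have
`tanh (u₀ + ∑_{i=1}^K ∑_{j=1}^T tanh (u j / K) * f_{|u j|/K}(M j 0 + ∑ k M j (k+1) x k))`
converges as `K → ∞` to `tanh (u₀ + ∑ j u j * tanh (M j 0 + ∑ k M j (k+1) x k))`. -/
theorem tanh_network_limit_of_rbm {T n : ℕ} (hT : 0 < T) (hn : 0 < n)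
    (u0 : ℝ) (u : Fin T → ℝ) (M : Fin T → Fin (n + 1) → ℝ) (x : Fin n → ℝ) :
    Tendsto (fun K : ℕ =>
        Real.tanh (u0 + ∑ _i ∈ Finset.range K, ∑ j : Fin T,
          Real.tanh (u j / K) *
            fAct (|u j| / K) (M j 0 + ∑ k : Fin n, M j k.succ * x k)))
      atTop
      (nhds (Real.tanh (u0 + ∑ j : Fin T,
        u j * Real.tanh (M j 0 + ∑ k : Fin n, M j k.succ * x k)))) := by
  set z : Fin T → ℝ := fun j => M j 0 + ∑ k : Fin n, M j k.succ * x k with hz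
  have hcont : Continuous (fun s : ℝ => Real.tanh (u0 + s)) :=
    continuous_tanh'.comp (continuous_const.add continuous_id)
  have hmain : Tendsto (fun K : ℕ => ∑ j : Fin T,
      (K:ℝ) * (Real.tanh (u j / K) * fAct (|u j| / K) (z j))) atTop
      (nhds (∑ j : Fin T, u j * Real.tanh (z j))) := by
    apply tendsto_finset_sum
    intro j _
    rcases eq_or_ne (u j) 0 with hu | hu
    · have : (fun K : ℕ => (K:ℝ) * (Real.tanh (u j / K) * fAct (|u j| / K) (z j)))
          = fun _ => 0 := by
        funext K; simp [hu, Real.tanh_zero]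
      rw [this, hu]
      simpa using tendsto_const_nhds
    · have hd : (0:ℝ) < |u j| := abs_pos.mpr hu
      have h1 : Tendsto (fun K : ℕ => (K:ℝ) * Real.tanh (u j / K)) atTop (nhds (u j)) :=
        key_lim hasDerivAt_tanh_zero Real.tanh_zero (u j)
      have h2 : Tendsto (fun K : ℕ =>
          (1 / |u j|) * ((K:ℝ) * arctanh ((|u j| * Real.tanh (z j)) / K))) atTop
          (nhds (Real.tanh (z j))) := by
        have := (key_lim hasDerivAt_arctanh_zero (by simp [arctanh])
            (|u j| * Real.tanh (z j))).const_mul (1 / |u j|)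
        have heq : (1 / |u j|) * (|u j| * Real.tanh (z j)) = Real.tanh (z j) := by
          field_simp
        rwa [heq] at this
      have := h1.mul h2
      refine this.congr' ?_
      filter_upwards [eventually_gt_atTop 0] with K hK
      have hK0 : (K:ℝ) ≠ 0 := Nat.cast_ne_zero.mpr hK.ne'
      have hb : |u j| / (K:ℝ) ≠ 0 := div_ne_zero hd.ne' hK0
      simp only [fAct, if_neg hb]
      have harg : |u j| / (K:ℝ) * Real.tanh (z j) = (|u j| * Real.tanh (z j)) / K := by
        ring
      rw [harg]
      field_simp
  have hrw : ∀ K : ℕ, (∑ _i ∈ Finset.range K, ∑ j : Fin T,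
      Real.tanh (u j / K) * fAct (|u j| / K) (z j))
      = ∑ j : Fin T, (K:ℝ) * (Real.tanh (u j / K) * fAct (|u j| / K) (z j)) := by
    intro K
    rw [Finset.sum_const, Finset.card_range, nsmul_eq_mul, Finset.mul_sum]
  have := hcont.continuousAt.tendsto.comp hmain
  refine this.congr ?_
  intro K
  rw [hrw K]
  rfl
end

section
/- Let W be an n1 × n2 real matrix and b¹ ∈ ℝ^{n1}, b² ∈ ℝ^{n2}, and suppose that for every visible index i ∈ [n1], Σ_{j=1}^{n2} |W_{ij}| + |b¹_i| ≤ λ₁. Let P be the marginal distribution on the visible units {±1}^{n1} of the RBM with probability mass function proportional to exp(⟨x, W h⟩ + ⟨b¹, x⟩ + ⟨b², h⟩) on {±1}^{n1} × {±1}^{n2}. Then for every d ≤ n1, δ_P(d) ≥ (1 − tanh(λ₁))^d. -/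
open Finset Real

/-- RBM weight `exp(⟨x, W h⟩ + ⟨b¹, x⟩ + ⟨b², h⟩)` of a joint spin configuration,
encoded by booleans. -/
noncomputable def rbmExp {n1 n2 : ℕ} (W : Fin n1 → Fin n2 → ℝ) (b1 : Fin n1 → ℝ)
    (b2 : Fin n2 → ℝ) (x : Fin n1 → Bool) (h : Fin n2 → Bool) : ℝ :=
  Real.exp ((∑ i, ∑ j, spin (x i) * W i j * spin (h j)) +
    (∑ i, b1 i * spin (x i)) + (∑ j, b2 j * spin (h j)))

/-- Marginal distribution of the visible units of the RBM. -/
noncomputable def rbmVisible {n1 n2 : ℕ} (W : Fin n1 → Fin n2 → ℝ) (b1 : Fin n1 → ℝ)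
    (b2 : Fin n2 → ℝ) (x : Fin n1 → Bool) : ℝ :=
  (∑ h : Fin n2 → Bool, rbmExp W b1 b2 x h) /
    ∑ y : Fin n1 → Bool, ∑ h : Fin n2 → Bool, rbmExp W b1 b2 y h

lemma spin_not (b : Bool) : spin (!b) = - spin b := by cases b <;> simp [spin]

lemma spin_abs (b : Bool) : |spin b| = 1 := by cases b <;> simp [spin]

lemma one_sub_tanh (L : ℝ) : 1 - Real.tanh L = 2 / (Real.exp (2 * L) + 1) := by
  rw [Real.tanh_eq_sinh_div_cosh, Real.sinh_eq, Real.cosh_eq]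
  have h1 : (0:ℝ) < Real.exp L + Real.exp (-L) := by positivity
  have h2 : (0:ℝ) < Real.exp (2 * L) + 1 := by positivity
  have h5 : Real.exp (-L) * Real.exp (2 * L) = Real.exp L := by
    rw [← Real.exp_add]; ring_nf
  field_simp
  rw [show L * 2 = 2 * L by ring]
  nlinarith [h5]

lemma rbmExp_repr {n1 n2 : ℕ} (W : Fin n1 → Fin n2 → ℝ) (b1 : Fin n1 → ℝ)
    (b2 : Fin n2 → ℝ) (x : Fin n1 → Bool) (h : Fin n2 → Bool) :
    rbmExp W b1 b2 x h =
      Real.exp ((∑ i, spin (x i) * ((∑ j, W i j * spin (h j)) + b1 i)) +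
        ∑ j, b2 j * spin (h j)) := by
  unfold rbmExp
  congr 1
  rw [← Finset.sum_add_distrib]
  congr 1
  · apply Finset.sum_congr rfl
    intro i _
    rw [mul_add, Finset.mul_sum]
    congr 1
    · apply Finset.sum_congr rfl; intro j _; ring
    · ring

lemma rbmExp_flip {n1 n2 : ℕ} (W : Fin n1 → Fin n2 → ℝ) (b1 : Fin n1 → ℝ)
    (b2 : Fin n2 → ℝ) (x : Fin n1 → Bool) (h : Fin n2 → Bool) (i : Fin n1) :
    rbmExp W b1 b2 (Function.update x i (!x i)) h =
      Real.exp (-(2 * spin (x i) * ((∑ j, W i j * spin (h j)) + b1 i))) *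
        rbmExp W b1 b2 x h := by
  rw [rbmExp_repr, rbmExp_repr, ← Real.exp_add]
  congr 1
  have hg : (fun k => spin (Function.update x i (!x i) k) * ((∑ j, W k j * spin (h j)) + b1 k))
      = Function.update (fun k => spin (x k) * ((∑ j, W k j * spin (h j)) + b1 k)) i
          (spin (!x i) * ((∑ j, W i j * spin (h j)) + b1 i)) := by
    funext k
    rcases eq_or_ne k i with rfl | hk
    · simp
    · simp [Function.update_of_ne hk]
  rw [hg, Finset.sum_update_of_mem (Finset.mem_univ i),
    Finset.sum_eq_sum_sdiff_singleton_add (Finset.mem_univ i)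
      (fun k => spin (x k) * ((∑ j, W k j * spin (h j)) + b1 k)), spin_not]
  ring

lemma key_pointwise {n1 n2 : ℕ} (W : Fin n1 → Fin n2 → ℝ) (b1 : Fin n1 → ℝ)
    (b2 : Fin n2 → ℝ) (lam1 : ℝ)
    (hlam : ∀ i, (∑ j, |W i j|) + |b1 i| ≤ lam1)
    (x : Fin n1 → Bool) (h : Fin n2 → Bool) (i : Fin n1) :
    (1 - Real.tanh lam1) / 2 *
      (rbmExp W b1 b2 x h + rbmExp W b1 b2 (Function.update x i (!x i)) h)
      ≤ rbmExp W b1 b2 x h := by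
  rw [rbmExp_flip]
  set A := rbmExp W b1 b2 x h with hA
  have hApos : 0 < A := Real.exp_pos _
  set u : ℝ := spin (x i) * ((∑ j, W i j * spin (h j)) + b1 i) with hu'
  have hu : |u| ≤ lam1 := by
    have h1 : |u| = |(∑ j, W i j * spin (h j)) + b1 i| := by
      rw [hu', abs_mul, spin_abs, one_mul]
    rw [h1]
    calc |(∑ j, W i j * spin (h j)) + b1 i|
        ≤ |∑ j, W i j * spin (h j)| + |b1 i| := abs_add_le _ _
      _ ≤ (∑ j, |W i j|) + |b1 i| := by
          gcongr
          calc |∑ j, W i j * spin (h j)| ≤ ∑ j, |W i j * spin (h j)| :=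
                Finset.abs_sum_le_sum_abs _ _
            _ = ∑ j, |W i j| := by
                apply Finset.sum_congr rfl; intro j _
                rw [abs_mul, spin_abs, mul_one]
      _ ≤ lam1 := hlam i
  have hfac : -(2 * spin (x i) * ((∑ j, W i j * spin (h j)) + b1 i)) = -(2 * u) := by
    rw [hu']; ring
  rw [hfac, one_sub_tanh]
  have hexp : Real.exp (-(2 * u)) ≤ Real.exp (2 * lam1) := by
    apply Real.exp_le_exp.mpr
    have := abs_le.mp hu
    linarith [this.1]
  have hz : (0:ℝ) < Real.exp (2 * lam1) + 1 := by positivity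
  have hv : (0:ℝ) < Real.exp (-(2 * u)) := Real.exp_pos _
  rw [div_div, div_mul_eq_mul_div, div_le_iff₀ (by positivity)]
  nlinarith [hexp, hApos, hv]

lemma key_summed {n1 n2 : ℕ} (W : Fin n1 → Fin n2 → ℝ) (b1 : Fin n1 → ℝ)
    (b2 : Fin n2 → ℝ) (lam1 : ℝ)
    (hlam : ∀ i, (∑ j, |W i j|) + |b1 i| ≤ lam1)
    (x : Fin n1 → Bool) (i : Fin n1) :
    (1 - Real.tanh lam1) / 2 *
      ((∑ h : Fin n2 → Bool, rbmExp W b1 b2 x h) +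
        ∑ h : Fin n2 → Bool, rbmExp W b1 b2 (Function.update x i (!x i)) h)
      ≤ ∑ h : Fin n2 → Bool, rbmExp W b1 b2 x h := by
  rw [← Finset.sum_add_distrib, Finset.mul_sum]
  exact Finset.sum_le_sum fun h _ => key_pointwise W b1 b2 lam1 hlam x h i

lemma one_sub_tanh_pos (L : ℝ) : 0 < 1 - Real.tanh L := by
  rw [one_sub_tanh]; positivity

lemma main_ind {n1 n2 : ℕ} (W : Fin n1 → Fin n2 → ℝ) (b1 : Fin n1 → ℝ)
    (b2 : Fin n2 → ℝ) (lam1 : ℝ)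
    (hlam : ∀ i, (∑ j, |W i j|) + |b1 i| ≤ lam1)
    (a : Fin n1 → Bool) (S : Finset (Fin n1)) :
    ((1 - Real.tanh lam1) / 2) ^ S.card *
        (∑ y : Fin n1 → Bool, ∑ h : Fin n2 → Bool, rbmExp W b1 b2 y h)
      ≤ ∑ x ∈ Finset.univ.filter (fun x : Fin n1 → Bool => ∀ k ∈ S, x k = a k),
          ∑ h : Fin n2 → Bool, rbmExp W b1 b2 x h := by
  classical
  set F : (Fin n1 → Bool) → ℝ := fun x => ∑ h : Fin n2 → Bool, rbmExp W b1 b2 x h with hF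
  induction S using Finset.induction_on with
  | empty => simp
  | insert i S hi ih =>
    have hc : 0 < (1 - Real.tanh lam1) / 2 := by
      have := one_sub_tanh_pos lam1; linarith
    -- the filter over `insert i S` equals the filter over `S` restricted to `x i = a i`
    have hset : (Finset.univ.filter (fun x : Fin n1 → Bool => ∀ k ∈ S, x k = a k)).filter
          (fun x => x i = a i)
        = Finset.univ.filter (fun x : Fin n1 → Bool => ∀ k ∈ insert i S, x k = a k) := by
      ext x
      simp only [Finset.mem_filter, Finset.mem_univ, true_and, Finset.forall_mem_insert]
      tauto
    set T := Finset.univ.filter (fun x : Fin n1 → Bool => ∀ k ∈ insert i S, x k = a k) with hT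
    -- pair up via flipping coordinate i
    have hupd : ∀ x : Fin n1 → Bool,
        Function.update (Function.update x i (!x i)) i (!(Function.update x i (!x i)) i) = x := by
      intro x
      funext k
      rcases eq_or_ne k i with rfl | hk
      · simp
      · simp [Function.update_of_ne hk]
    have hpair : ∑ x ∈ (Finset.univ.filter
            (fun x : Fin n1 → Bool => ∀ k ∈ S, x k = a k)).filter (fun x => ¬ x i = a i),
          F x
        = ∑ x ∈ T, F (Function.update x i (!x i)) := by
      refine Finset.sum_bij' (fun x _ => Function.update x i (!x i))
        (fun x _ => Function.update x i (!x i)) ?_ ?_ ?_ ?_ ?_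
      · intro x hx
        simp only [Finset.mem_filter, Finset.mem_univ, true_and] at hx
        simp only [hT, Finset.mem_filter, Finset.mem_univ, true_and,
          Finset.forall_mem_insert]
        refine ⟨?_, ?_⟩
        · rw [Function.update_self]
          have h2 := hx.2
          cases hxi : x i <;> cases hai : a i <;> simp_all
        · intro k hk
          rw [Function.update_of_ne (by rintro rfl; exact hi hk)]
          exact hx.1 k hk
      · intro x hx
        simp only [hT, Finset.mem_filter, Finset.mem_univ, true_and,
          Finset.forall_mem_insert] at hx
        simp only [Finset.mem_filter, Finset.mem_univ, true_and]
        refine ⟨?_, ?_⟩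
        · intro k hk
          rw [Function.update_of_ne (by rintro rfl; exact hi hk)]
          exact hx.2 k hk
        · rw [Function.update_self, hx.1]
          cases a i <;> simp
      · intro x _
        exact hupd x
      · intro x _
        exact hupd x
      · intro x _
        exact (congrArg F (hupd x)).symm
    have hsplit : ∑ x ∈ Finset.univ.filter
            (fun x : Fin n1 → Bool => ∀ k ∈ S, x k = a k), F x
        = ∑ x ∈ T, (F x + F (Function.update x i (!x i))) := by
      rw [← Finset.sum_filter_add_sum_filter_not
        (Finset.univ.filter (fun x : Fin n1 → Bool => ∀ k ∈ S, x k = a k))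
        (fun x => x i = a i) F, hset, hpair, Finset.sum_add_distrib]
    have hstep : (1 - Real.tanh lam1) / 2 *
        ∑ x ∈ Finset.univ.filter (fun x : Fin n1 → Bool => ∀ k ∈ S, x k = a k), F x
        ≤ ∑ x ∈ T, F x := by
      rw [hsplit, Finset.mul_sum]
      exact Finset.sum_le_sum fun x _ => key_summed W b1 b2 lam1 hlam x i
    rw [Finset.card_insert_of_notMem hi, pow_succ]
    calc ((1 - Real.tanh lam1) / 2) ^ S.card * ((1 - Real.tanh lam1) / 2) *
          (∑ y : Fin n1 → Bool, F y)
        = (1 - Real.tanh lam1) / 2 *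
            (((1 - Real.tanh lam1) / 2) ^ S.card * ∑ y : Fin n1 → Bool, F y) := by ring
      _ ≤ (1 - Real.tanh lam1) / 2 *
            ∑ x ∈ Finset.univ.filter (fun x : Fin n1 → Bool => ∀ k ∈ S, x k = a k), F x := by
          apply mul_le_mul_of_nonneg_left ih hc.le
      _ ≤ ∑ x ∈ T, F x := hstep

/-- **Lemma (unpredictability of spins in an `ℓ¹`-bounded RBM).**
If `∑_j |W i j| + |b¹ i| ≤ λ₁` for every visible unit `i`, then the visible marginal `P`
of the RBM satisfies `δ_P(d) ≥ (1 − tanh λ₁)^d`, i.e. for every set `S` of at most `d`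
visible units and every assignment `a`,
`2^{|S|} · Pr_P(X_S = a_S) ≥ (1 − tanh λ₁)^d`. -/
theorem rbm_delta_lower_bound {n1 n2 : ℕ} (hn1 : 0 < n1) (hn2 : 0 < n2)
    (W : Fin n1 → Fin n2 → ℝ) (b1 : Fin n1 → ℝ) (b2 : Fin n2 → ℝ) (lam1 : ℝ)
    (hlam : ∀ i, (∑ j, |W i j|) + |b1 i| ≤ lam1)
    (d : ℕ) (hd : d ≤ n1)
    (S : Finset (Fin n1)) (hS : S.card ≤ d) (a : Fin n1 → Bool) :
    (1 - Real.tanh lam1) ^ d ≤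
      2 ^ S.card *
        ∑ x ∈ Finset.univ.filter (fun x : Fin n1 → Bool => ∀ i ∈ S, x i = a i),
          rbmVisible W b1 b2 x := by
  classical
  have hlam0 : 0 ≤ lam1 := by
    have := hlam ⟨0, hn1⟩
    have h0 : (0:ℝ) ≤ (∑ j, |W ⟨0, hn1⟩ j|) + |b1 ⟨0, hn1⟩| := by positivity
    linarith
  have htanh0 : 0 ≤ Real.tanh lam1 := by
    rw [Real.tanh_eq_sinh_div_cosh]
    refine div_nonneg ?_ (Real.cosh_pos lam1).le
    rw [show (0:ℝ) = Real.sinh 0 by simp]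
    exact Real.sinh_le_sinh.mpr hlam0
  have h1 : 0 ≤ 1 - Real.tanh lam1 := (one_sub_tanh_pos lam1).le
  have h2 : 1 - Real.tanh lam1 ≤ 1 := by linarith
  set Z : ℝ := ∑ y : Fin n1 → Bool, ∑ h : Fin n2 → Bool, rbmExp W b1 b2 y h with hZ
  have hZpos : 0 < Z := by
    apply Finset.sum_pos
    · intro y _
      apply Finset.sum_pos
      · intro h _; exact Real.exp_pos _
      · exact Finset.univ_nonempty
    · exact Finset.univ_nonempty
  have hmain := main_ind W b1 b2 lam1 hlam a S
  have hvis : ∑ x ∈ Finset.univ.filter (fun x : Fin n1 → Bool => ∀ i ∈ S, x i = a i),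
        rbmVisible W b1 b2 x
      = (∑ x ∈ Finset.univ.filter (fun x : Fin n1 → Bool => ∀ i ∈ S, x i = a i),
          ∑ h : Fin n2 → Bool, rbmExp W b1 b2 x h) / Z := by
    unfold rbmVisible
    rw [← hZ, Finset.sum_div]
  rw [hvis]
  calc (1 - Real.tanh lam1) ^ d ≤ (1 - Real.tanh lam1) ^ S.card :=
        pow_le_pow_of_le_one h1 h2 hS
    _ = 2 ^ S.card * ((1 - Real.tanh lam1) / 2) ^ S.card := by
        rw [← mul_pow]; ring_nf
    _ ≤ 2 ^ S.card * ((∑ x ∈ Finset.univ.filter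
          (fun x : Fin n1 → Bool => ∀ i ∈ S, x i = a i),
          ∑ h : Fin n2 → Bool, rbmExp W b1 b2 x h) / Z) := by
        apply mul_le_mul_of_nonneg_left _ (by positivity)
        rw [le_div_iff₀ hZpos]
        exact hmain
end

section
/- For every β ∈ [0,1] and every complex number z = x + iy with |y| ≤ π/4: cosh(z) ≠ 0, the quantity 1 − β² tanh²(z) is nonzero, and | (1 − tanh²(z)) / (1 − β² tanh²(z)) | ≤ 2. -/
open Complex Real

lemma re_w_ge (β : ℝ) (hβ0 : 0 ≤ β) (hβ1 : β ≤ 1)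
    (z : ℂ) (hz : |z.im| ≤ Real.pi / 4) :
    (1 / 2 : ℝ) ≤ ((1 : ℂ) + (1 - (β : ℂ) ^ 2) * Complex.sinh z ^ 2).re := by
  have hy : |z.im| ≤ Real.pi / 4 := hz
  have hcos2 : 0 ≤ Real.cos (2 * z.im) := by
    apply Real.cos_nonneg_of_mem_Icc
    constructor
    · nlinarith [abs_le.1 hy, Real.pi_pos]
    · nlinarith [abs_le.1 hy, Real.pi_pos]
  have hsin2 : Real.sin z.im ^ 2 ≤ 1 / 2 := by
    have : Real.sin z.im ^ 2 = (1 - Real.cos (2 * z.im)) / 2 := by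
      rw [Real.cos_two_mul]
      nlinarith [Real.sin_sq_add_cos_sq z.im]
    rw [this]
    nlinarith [Real.cos_le_one (2 * z.im)]
  have hsinh : Complex.sinh z
      = (Real.sinh z.re * Real.cos z.im : ℝ) + (Real.cosh z.re * Real.sin z.im : ℝ) * Complex.I := by
    conv_lhs => rw [← Complex.re_add_im z]
    rw [Complex.sinh_add, Complex.sinh_mul_I, Complex.cosh_mul_I]
    push_cast
    rw [← Complex.ofReal_sinh, ← Complex.ofReal_cosh, ← Complex.ofReal_sin, ← Complex.ofReal_cos]
    ring
  have hre : (Complex.sinh z ^ 2).re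
      = Real.sinh z.re ^ 2 * Real.cos (2 * z.im) - Real.sin z.im ^ 2 := by
    rw [sq, Complex.mul_re, hsinh, Real.cos_two_mul']
    simp only [Complex.add_re, Complex.add_im, Complex.mul_re, Complex.mul_im,
      Complex.ofReal_re, Complex.ofReal_im, Complex.I_re, Complex.I_im]
    nlinarith [Real.cosh_sq z.re, Real.sin_sq_add_cos_sq z.im]
  have ht0 : (0 : ℝ) ≤ 1 - β ^ 2 := by nlinarith
  have ht1 : 1 - β ^ 2 ≤ 1 := by nlinarith
  have hexpr : -(1 / 2 : ℝ) ≤ (Complex.sinh z ^ 2).re := by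
    rw [hre]; nlinarith [sq_nonneg (Real.sinh z.re)]
  have : ((1 : ℂ) + (1 - (β : ℂ) ^ 2) * Complex.sinh z ^ 2).re
      = 1 + (1 - β ^ 2) * (Complex.sinh z ^ 2).re := by
    rw [show ((1:ℂ) - (β:ℂ)^2) = ((1 - β^2 : ℝ):ℂ) by push_cast; ring,
      Complex.add_re, Complex.one_re, Complex.re_ofReal_mul]
  rw [this]
  nlinarith

/-- **Lemma (uniform derivative bound for the activations).** For every `β ∈ [0,1]`
and every complex `z = x + iy` with `|y| ≤ π/4`: `cosh z ≠ 0`,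
`1 − β² tanh² z ≠ 0`, and `|(1 − tanh² z)/(1 − β² tanh² z)| ≤ 2`. -/
theorem fbeta_deriv_bound (β : ℝ) (hβ0 : 0 ≤ β) (hβ1 : β ≤ 1)
    (z : ℂ) (hz : |z.im| ≤ Real.pi / 4) :
    Complex.cosh z ≠ 0 ∧
    (1 - (β : ℂ) ^ 2 * Complex.tanh z ^ 2) ≠ 0 ∧
    ‖(1 - Complex.tanh z ^ 2) / (1 - (β : ℂ) ^ 2 * Complex.tanh z ^ 2)‖ ≤ 2 := by
  have hcosy : 0 < Real.cos z.im := by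
    apply Real.cos_pos_of_mem_Ioo
    constructor
    · nlinarith [abs_le.1 hz, Real.pi_pos]
    · nlinarith [abs_le.1 hz, Real.pi_pos]
  have hcosh : Complex.cosh z ≠ 0 := by
    intro h
    have hcosh : Complex.cosh z
        = (Real.cosh z.re * Real.cos z.im : ℝ) + (Real.sinh z.re * Real.sin z.im : ℝ) * Complex.I := by
      conv_lhs => rw [← Complex.re_add_im z]
      rw [Complex.cosh_add, Complex.sinh_mul_I, Complex.cosh_mul_I]
      push_cast
      rw [← Complex.ofReal_sinh, ← Complex.ofReal_cosh, ← Complex.ofReal_sin, ← Complex.ofReal_cos]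
      ring
    have : (Complex.cosh z).re = 0 := by rw [h]; simp
    rw [hcosh] at this
    simp only [Complex.add_re, Complex.mul_re, Complex.ofReal_re, Complex.ofReal_im,
      Complex.I_re, Complex.I_im] at this
    nlinarith [Real.cosh_pos z.re]
  set w : ℂ := (1 : ℂ) + (1 - (β : ℂ) ^ 2) * Complex.sinh z ^ 2 with hw
  have hwre := re_w_ge β hβ0 hβ1 z hz
  have hwabs : (1 / 2 : ℝ) ≤ ‖w‖ := le_trans hwre (Complex.re_le_norm w)
  have hwne : w ≠ 0 := by
    intro h
    rw [h] at hwabs; simp at hwabs; linarith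
  have hid : cosh z ^ 2 - (β : ℂ) ^ 2 * Complex.sinh z ^ 2 = w := by
    rw [hw]
    have := Complex.cosh_sq_sub_sinh_sq z
    linear_combination this
  have hden : 1 - (β : ℂ) ^ 2 * Complex.tanh z ^ 2 = w / Complex.cosh z ^ 2 := by
    rw [Complex.tanh_eq_sinh_div_cosh, ← hid]
    field_simp
  have hdenne : 1 - (β : ℂ) ^ 2 * Complex.tanh z ^ 2 ≠ 0 := by
    rw [hden]
    exact div_ne_zero hwne (pow_ne_zero 2 hcosh)
  refine ⟨hcosh, hdenne, ?_⟩
  have hnum : 1 - Complex.tanh z ^ 2 = 1 / Complex.cosh z ^ 2 := by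
    rw [Complex.tanh_eq_sinh_div_cosh]
    field_simp
    linear_combination Complex.cosh_sq_sub_sinh_sq z
  have hq : (1 - Complex.tanh z ^ 2) / (1 - (β : ℂ) ^ 2 * Complex.tanh z ^ 2) = 1 / w := by
    rw [hnum, hden]
    field_simp
  rw [hq]
  rw [norm_div]
  simp only [norm_one]
  rw [div_le_iff₀ (by linarith : (0:ℝ) < ‖w‖)]
  linarith
end

section
/- Let n1, n2 be positive integers, W an n1 × n2 real matrix, w ∈ ℝ^{n2}, b¹ ∈ ℝ^{n1}, b² ∈ ℝ^{n2}, b³ ∈ ℝ, and consider the supervised RBM joint distribution on (x, h, y) ∈ {±1}^{n1} × {±1}^{n2} × {±1} given by Pr(X = x, H = h, Y = y) = exp( ⟨x, W h⟩ + ⟨h, w⟩ y + ⟨b¹, x⟩ + ⟨b², h⟩ + b³ y )/Z. Then for every x ∈ {±1}^{n1}, E[Y | X = x] = tanh( b³ + Σ_{j=1}^{n2} arctanh( tanh(w_j) · tanh( b²_j + Σ_{i=1}^{n1} W_{ij} x_i ) ) ). -/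
open Finset Real

/-- Weight `exp(⟨x, W h⟩ + ⟨h, w⟩ y + ⟨b¹, x⟩ + ⟨b², h⟩ + b³ y)` of a joint
configuration of the supervised RBM. -/
noncomputable def srbmExp {n1 n2 : ℕ} (W : Fin n1 → Fin n2 → ℝ) (w : Fin n2 → ℝ)
    (b1 : Fin n1 → ℝ) (b2 : Fin n2 → ℝ) (b3 : ℝ)
    (x : Fin n1 → ℝ) (h : Fin n2 → ℝ) (y : ℝ) : ℝ :=
  Real.exp ((∑ i, ∑ j, x i * W i j * h j) + (∑ j, h j * w j) * y +
    (∑ i, b1 i * x i) + (∑ j, b2 j * h j) + b3 * y)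

lemma div_cancel_aux (p q c : ℝ) (hc : c ≠ 0) : p / c / (q / c) = p / q := by
  rcases eq_or_ne q 0 with h | h
  · simp [h]
  · field_simp

lemma aux_one_add (a b : ℝ) :
    1 + Real.tanh a * Real.tanh b = Real.cosh (b + a) / (Real.cosh a * Real.cosh b) := by
  rw [Real.tanh_eq_sinh_div_cosh, Real.tanh_eq_sinh_div_cosh, Real.cosh_add]
  field_simp [(Real.cosh_pos a).ne', (Real.cosh_pos b).ne']

lemma aux_one_sub (a b : ℝ) :
    1 - Real.tanh a * Real.tanh b = Real.cosh (b - a) / (Real.cosh a * Real.cosh b) := by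
  rw [Real.tanh_eq_sinh_div_cosh, Real.tanh_eq_sinh_div_cosh, Real.cosh_sub]
  field_simp [(Real.cosh_pos a).ne', (Real.cosh_pos b).ne']

lemma aux_arctanh (a b : ℝ) :
    arctanh (Real.tanh a * Real.tanh b)
      = (1/2) * (Real.log (Real.cosh (b + a)) - Real.log (Real.cosh (b - a))) := by
  rw [arctanh, aux_one_add, aux_one_sub,
    div_cancel_aux _ _ _ (by positivity : Real.cosh a * Real.cosh b ≠ 0),
    Real.log_div (Real.cosh_pos _).ne' (Real.cosh_pos _).ne']

lemma tanh_eq_exp' (z : ℝ) :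
    Real.tanh z = (Real.exp z - Real.exp (-z)) / (Real.exp z + Real.exp (-z)) := by
  rw [Real.tanh_eq_sinh_div_cosh, Real.sinh_eq, Real.cosh_eq,
    div_cancel_aux _ _ _ (two_ne_zero)]

lemma srbm_master {n : ℕ} (c : ℝ) (a b : Fin n → ℝ) :
    (Real.exp c * ∏ j, (Real.exp (b j + a j) + Real.exp (-(b j + a j)))
      - Real.exp (-c) * ∏ j, (Real.exp (b j - a j) + Real.exp (-(b j - a j)))) /
    (Real.exp c * ∏ j, (Real.exp (b j + a j) + Real.exp (-(b j + a j)))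
      + Real.exp (-c) * ∏ j, (Real.exp (b j - a j) + Real.exp (-(b j - a j)))) =
    Real.tanh (c + ∑ j, arctanh (Real.tanh (a j) * Real.tanh (b j))) := by
  have h2 : ∀ t : ℝ, Real.exp t + Real.exp (-t) = 2 * Real.cosh t := fun t => by
    rw [Real.cosh_eq]; ring
  set P := ∏ j, Real.cosh (b j + a j) with hP
  set Q := ∏ j, Real.cosh (b j - a j) with hQ
  have hPpos : 0 < P := Finset.prod_pos fun j _ => Real.cosh_pos _
  have hQpos : 0 < Q := Finset.prod_pos fun j _ => Real.cosh_pos _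
  have hprod1 : ∏ j, (Real.exp (b j + a j) + Real.exp (-(b j + a j))) = 2 ^ n * P := by
    simp_rw [h2]; rw [Finset.prod_mul_distrib, Finset.prod_const]; simp [hP]
  have hprod2 : ∏ j, (Real.exp (b j - a j) + Real.exp (-(b j - a j))) = 2 ^ n * Q := by
    simp_rw [h2]; rw [Finset.prod_mul_distrib, Finset.prod_const]; simp [hQ]
  have hsum : ∑ j, arctanh (Real.tanh (a j) * Real.tanh (b j))
      = (1/2) * (Real.log P - Real.log Q) := by
    simp_rw [aux_arctanh]
    rw [← Finset.mul_sum, Finset.sum_sub_distrib,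
      ← Real.log_prod (fun j _ => (Real.cosh_pos _).ne'),
      ← Real.log_prod (fun j _ => (Real.cosh_pos _).ne')]
  rw [hprod1, hprod2, hsum, tanh_eq_exp']
  set r := Real.exp ((1/2) * (Real.log P - Real.log Q)) with hr
  have hrpos : 0 < r := Real.exp_pos _
  have hr2 : r * r = P / Q := by
    rw [hr, ← Real.exp_add]
    rw [show (1/2) * (Real.log P - Real.log Q) + (1/2) * (Real.log P - Real.log Q)
        = Real.log P - Real.log Q by ring]
    rw [Real.exp_sub, Real.exp_log hPpos, Real.exp_log hQpos]
  have hPeq : P = r * r * Q := by rw [hr2]; field_simp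
  have hz1 : Real.exp (c + (1/2) * (Real.log P - Real.log Q)) = Real.exp c * r := by
    rw [Real.exp_add]
  have hz2 : Real.exp (-(c + (1/2) * (Real.log P - Real.log Q)))
      = Real.exp (-c) * r⁻¹ := by
    rw [neg_add, Real.exp_add, Real.exp_neg, Real.exp_neg, ← hr]
  rw [hz1, hz2, hPeq]
  have h2n : (0:ℝ) < 2 ^ n := by positivity
  have hd1 : 0 < Real.exp c * (2 ^ n * (r * r * Q)) + Real.exp (-c) * (2 ^ n * Q) := by
    positivity
  have hd2 : 0 < Real.exp c * r + Real.exp (-c) * r⁻¹ := by positivity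
  rw [div_eq_div_iff hd1.ne' hd2.ne']
  field_simp

lemma srbm_inner_sum {n1 n2 : ℕ} (W : Fin n1 → Fin n2 → ℝ) (w : Fin n2 → ℝ)
    (b1 : Fin n1 → ℝ) (b2 : Fin n2 → ℝ) (b3 : ℝ) (x : Fin n1 → ℝ) (y : ℝ) :
    (∑ ε : Fin n2 → Bool, srbmExp W w b1 b2 b3 x (fun j => spin (ε j)) y)
      = Real.exp ((∑ i, b1 i * x i) + b3 * y) *
        ∏ j, (Real.exp ((b2 j + ∑ i, W i j * x i) + w j * y)
          + Real.exp (-((b2 j + ∑ i, W i j * x i) + w j * y))) := by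
  have step : ∀ ε : Fin n2 → Bool, srbmExp W w b1 b2 b3 x (fun j => spin (ε j)) y
      = Real.exp ((∑ i, b1 i * x i) + b3 * y) *
        ∏ j, Real.exp (spin (ε j) * ((b2 j + ∑ i, W i j * x i) + w j * y)) := by
    intro ε
    rw [srbmExp, ← Real.exp_sum, ← Real.exp_add]
    congr 1
    rw [Finset.sum_comm]
    simp_rw [mul_add, Finset.sum_add_distrib, Finset.mul_sum, Finset.sum_mul]
    ring_nf
    simp only [mul_comm, mul_left_comm, mul_assoc]
    ring
  simp_rw [step]
  rw [← Finset.mul_sum]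
  congr 1
  rw [← Fintype.prod_sum (f := fun j (s : Bool) =>
    Real.exp (spin s * ((b2 j + ∑ i, W i j * x i) + w j * y)))]
  refine Finset.prod_congr rfl fun j _ => ?_
  rw [Fintype.sum_bool]
  simp [spin]

/-- **Theorem (label prediction in a supervised RBM).** In the supervised RBM joint
distribution on `(x, h, y)`, for every visible configuration `x ∈ {±1}^{n1}`,
`E[Y | X = x] = tanh (b³ + ∑_j arctanh (tanh (w j) · tanh (b² j + ∑_i W i j x i)))`. -/
theorem srbm_label_prediction {n1 n2 : ℕ} (hn1 : 0 < n1) (hn2 : 0 < n2)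
    (W : Fin n1 → Fin n2 → ℝ) (w : Fin n2 → ℝ)
    (b1 : Fin n1 → ℝ) (b2 : Fin n2 → ℝ) (b3 : ℝ)
    (x : Fin n1 → ℝ) (hx : ∀ i, x i = 1 ∨ x i = -1) :
    (∑ s : Bool, ∑ ε : Fin n2 → Bool,
        spin s * srbmExp W w b1 b2 b3 x (fun j => spin (ε j)) (spin s)) /
      (∑ s : Bool, ∑ ε : Fin n2 → Bool,
        srbmExp W w b1 b2 b3 x (fun j => spin (ε j)) (spin s)) =
    Real.tanh (b3 + ∑ j,
      arctanh (Real.tanh (w j) * Real.tanh (b2 j + ∑ i, W i j * x i))) := by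
  rw [Fintype.sum_bool, Fintype.sum_bool,
    show spin true = (1:ℝ) from rfl, show spin false = (-1:ℝ) from rfl,
    ← Finset.mul_sum, ← Finset.mul_sum,
    srbm_inner_sum W w b1 b2 b3 x 1, srbm_inner_sum W w b1 b2 b3 x (-1)]
  simp only [mul_one, mul_neg_one, ← sub_eq_add_neg]
  rw [← srbm_master b3 w (fun j => b2 j + ∑ i, W i j * x i)]
  have hp1 : (0:ℝ) < ∏ j, (Real.exp ((b2 j + ∑ i, W i j * x i) + w j)
      + Real.exp (-((b2 j + ∑ i, W i j * x i) + w j))) :=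
    Finset.prod_pos fun j _ => by positivity
  have hp2 : (0:ℝ) < ∏ j, (Real.exp ((b2 j + ∑ i, W i j * x i) - w j)
      + Real.exp (-((b2 j + ∑ i, W i j * x i) - w j))) :=
    Finset.prod_pos fun j _ => by positivity
  have hd1 : (0:ℝ) < Real.exp ((∑ i, b1 i * x i) + b3) *
        (∏ j, (Real.exp ((b2 j + ∑ i, W i j * x i) + w j)
          + Real.exp (-((b2 j + ∑ i, W i j * x i) + w j)))) +
      Real.exp ((∑ i, b1 i * x i) - b3) *
        (∏ j, (Real.exp ((b2 j + ∑ i, W i j * x i) - w j)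
          + Real.exp (-((b2 j + ∑ i, W i j * x i) - w j)))) :=
    add_pos (mul_pos (Real.exp_pos _) hp1) (mul_pos (Real.exp_pos _) hp2)
  have hd2 : (0:ℝ) < Real.exp b3 *
        (∏ j, (Real.exp ((b2 j + ∑ i, W i j * x i) + w j)
          + Real.exp (-((b2 j + ∑ i, W i j * x i) + w j)))) +
      Real.exp (-b3) *
        (∏ j, (Real.exp ((b2 j + ∑ i, W i j * x i) - w j)
          + Real.exp (-((b2 j + ∑ i, W i j * x i) - w j)))) :=
    add_pos (mul_pos (Real.exp_pos _) hp1) (mul_pos (Real.exp_pos _) hp2)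
  rw [div_eq_div_iff hd1.ne' hd2.ne', Real.exp_add, Real.exp_sub, Real.exp_neg]
  field_simp
  ring
end

section
/- Let n, m be positive integers, γ ∈ (0,1], r ≥ 0, and let P be a probability distribution on {±1}ⁿ with P(x) ≥ γ/2ⁿ for every x. Let X₁, …, X_m be i.i.d. samples from P and σ₁, …, σ_m i.i.d. uniform {±1}-valued (Rademacher) random variables, independent of the X_i. Then E[ sup { (1/m) Σ_{i=1}^{m} σ_i g(X_i) : g : {±1}ⁿ → ℝ with E_{X∼P}[g(X)²] ≤ r/4 } ] ≤ 2^{n/2} √r / (2 √(γ m)). -/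
open Finset Real

lemma spin_sq (b : Bool) : spin b * spin b = 1 := by cases b <;> simp [spin]

lemma sum_prod_fn {α : Type*} [Fintype α] [DecidableEq α] (m : ℕ) (f : Fin m → α → ℝ) :
    ∑ X : Fin m → α, ∏ j, f j (X j) = ∏ j, ∑ y, f j y := by
  rw [Finset.prod_univ_sum (fun _ => Finset.univ) f, Fintype.piFinset_univ]

lemma rad_orth (m : ℕ) (i j : Fin m) :
    ∑ σ : Fin m → Bool, spin (σ i) * spin (σ j) = if i = j then (2:ℝ)^m else 0 := by
  split_ifs with h
  · subst h
    simp [spin_sq, Finset.card_univ]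
  · refine Finset.sum_involution (fun σ _ => Function.update σ i (!(σ i))) ?_ ?_
      (fun σ _ => Finset.mem_univ _) ?_
    · intro σ _
      rw [Function.update_self, Function.update_of_ne (Ne.symm h), spin_not]
      ring
    · intro σ _ _
      intro hc
      have := congrFun hc i
      rw [Function.update_self] at this
      exact (σ i).not_ne_self this
    · intro σ _
      funext k
      by_cases hk : k = i
      · subst hk; simp
      · simp [Function.update_of_ne hk]

lemma rad_sm (m : ℕ) (c : Fin m → ℝ) :
    ∑ σ : Fin m → Bool, (1/2^m : ℝ) * (∑ i, spin (σ i) * c i)^2 = ∑ i, (c i)^2 := by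
  have key : ∑ σ : Fin m → Bool, (∑ i, spin (σ i) * c i)^2 = 2^m * ∑ i, (c i)^2 := by
    calc ∑ σ : Fin m → Bool, (∑ i, spin (σ i) * c i)^2
        = ∑ σ : Fin m → Bool, ∑ i, ∑ j, (c i * c j) * (spin (σ i) * spin (σ j)) := by
          refine Finset.sum_congr rfl fun σ _ => ?_
          rw [sq, Finset.sum_mul_sum]
          exact Finset.sum_congr rfl fun i _ => Finset.sum_congr rfl fun j _ => by ring
      _ = ∑ i, ∑ j, (c i * c j) * ∑ σ : Fin m → Bool, (spin (σ i) * spin (σ j)) := by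
          rw [Finset.sum_comm]
          refine Finset.sum_congr rfl fun i _ => ?_
          rw [Finset.sum_comm]
          exact Finset.sum_congr rfl fun j _ => (Finset.mul_sum _ _ _).symm
      _ = ∑ i, ∑ j, (c i * c j) * (if i = j then (2:ℝ)^m else 0) := by
          simp only [rad_orth]
      _ = 2^m * ∑ i, (c i)^2 := by
          rw [Finset.mul_sum]
          refine Finset.sum_congr rfl fun i _ => ?_
          simp [mul_ite, Finset.sum_ite_eq, sq]
          ring
  rw [← Finset.mul_sum, key]
  have h2 : (2:ℝ)^m ≠ 0 := by positivity
  field_simp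

lemma marginal {n : ℕ} (m : ℕ) (P : (Fin n → Bool) → ℝ)
    (hsum : ∑ x : Fin n → Bool, P x = 1) (i : Fin m) (x : Fin n → Bool) :
    ∑ X : Fin m → (Fin n → Bool), (∏ j, P (X j)) * (if X i = x then (1:ℝ) else 0) = P x := by
  have h1 : ∀ X : Fin m → (Fin n → Bool),
      (∏ j, P (X j)) * (if X i = x then (1:ℝ) else 0)
        = ∏ j, (P (X j) * (if j = i then (if X j = x then (1:ℝ) else 0) else 1)) := by
    intro X
    rw [Finset.prod_mul_distrib, Finset.prod_ite_eq']
    simp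
  simp only [h1]
  rw [sum_prod_fn m (fun j y => P y * (if j = i then (if y = x then (1:ℝ) else 0) else 1))]
  rw [Finset.prod_eq_single i]
  · simp [mul_ite, Finset.sum_ite_eq']
  · intro j _ hj
    simp [hj, hsum]
  · intro hni
    exact absurd (Finset.mem_univ i) hni

/-- **Lemma (local Rademacher complexity bound on the hypercube).** Let `P` be a
distribution on `{±1}ⁿ` with `P(x) ≥ γ/2ⁿ` for all `x`. Drawing `X₁,…,X_m` i.i.d. from
`P` and independent Rademacher signs `σ₁,…,σ_m`, the expected supremum of the
Rademacher average `(1/m)∑ σᵢ g(Xᵢ)` over all `g` with `E_P[g²] ≤ r/4` is at most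
`2^{n/2} √r / (2 √(γ m))`. -/
theorem local_rademacher_bound {n m : ℕ} (hn : 0 < n) (hm : 0 < m)
    (γ r : ℝ) (hγ0 : 0 < γ) (hγ1 : γ ≤ 1) (hr : 0 ≤ r)
    (P : (Fin n → Bool) → ℝ) (hsum : ∑ x : Fin n → Bool, P x = 1)
    (hlb : ∀ x, γ / 2 ^ n ≤ P x) :
    (∑ X : Fin m → (Fin n → Bool), ∑ σ : Fin m → Bool,
        ((∏ i, P (X i)) * (1 / 2 ^ m)) *
          sSup {t : ℝ | ∃ g : (Fin n → Bool) → ℝ,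
            (∑ x : Fin n → Bool, P x * g x ^ 2) ≤ r / 4 ∧
            t = (1 / m) * ∑ i, spin (σ i) * g (X i)}) ≤
      (2 : ℝ) ^ ((n : ℝ) / 2) * Real.sqrt r / (2 * Real.sqrt (γ * m)) := by
  have hm' : (0:ℝ) < m := by exact_mod_cast hm
  have hPpos : ∀ x, 0 < P x := fun x => lt_of_lt_of_le (by positivity) (hlb x)
  set a : (Fin m → (Fin n → Bool)) → (Fin m → Bool) → (Fin n → Bool) → ℝ :=
    fun X σ x => (1 / m) * ∑ i, spin (σ i) * (if X i = x then 1 else 0) with ha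
  set Z : (Fin m → (Fin n → Bool)) → (Fin m → Bool) → ℝ :=
    fun X σ => ∑ x, (a X σ x)^2 / P x with hZdef
  have hZ0 : ∀ X σ, 0 ≤ Z X σ := fun X σ =>
    Finset.sum_nonneg fun x _ => div_nonneg (sq_nonneg _) (hPpos x).le
  have hw0 : ∀ X : Fin m → (Fin n → Bool), 0 ≤ (∏ i, P (X i)) * (1 / 2 ^ m : ℝ) := by
    intro X
    exact mul_nonneg (Finset.prod_nonneg fun i _ => (hPpos _).le) (by positivity)
  -- Step A : pointwise bound on the sup
  have stepA : ∀ X σ, sSup {t : ℝ | ∃ g : (Fin n → Bool) → ℝ,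
      (∑ x : Fin n → Bool, P x * g x ^ 2) ≤ r / 4 ∧
      t = (1 / m) * ∑ i, spin (σ i) * g (X i)}
      ≤ (Real.sqrt r / 2) * Real.sqrt (Z X σ) := by
    intro X σ
    apply Real.sSup_le
    · rintro t ⟨g, hg, rfl⟩
      have hgi : ∀ i, g (X i) = ∑ x, (if X i = x then (1:ℝ) else 0) * g x := by
        intro i
        simp [ite_mul, Finset.sum_ite_eq]
      have hrepr : (1/(m:ℝ)) * ∑ i, spin (σ i) * g (X i) = ∑ x, a X σ x * g x := by
        calc (1/(m:ℝ)) * ∑ i, spin (σ i) * g (X i)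
            = ∑ i, ∑ x, (1/(m:ℝ)) * (spin (σ i) * ((if X i = x then (1:ℝ) else 0) * g x)) := by
              rw [Finset.mul_sum]
              refine Finset.sum_congr rfl fun i _ => ?_
              rw [hgi i, Finset.mul_sum, Finset.mul_sum]
          _ = ∑ x, ∑ i, (1/(m:ℝ)) * (spin (σ i) * ((if X i = x then (1:ℝ) else 0) * g x)) :=
              Finset.sum_comm
          _ = ∑ x, a X σ x * g x := by
              refine Finset.sum_congr rfl fun x _ => ?_
              simp only [ha]
              rw [mul_assoc, Finset.sum_mul, Finset.mul_sum]
              exact Finset.sum_congr rfl fun i _ => by ring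
      rw [hrepr]
      have hsq : (∑ x, a X σ x * g x)^2 ≤ Z X σ * (r / 4) := by
        have hx : ∀ x : Fin n → Bool,
            a X σ x * g x = (a X σ x / Real.sqrt (P x)) * (Real.sqrt (P x) * g x) := by
          intro x
          have hP : Real.sqrt (P x) ≠ 0 := (Real.sqrt_pos.2 (hPpos x)).ne'
          field_simp
        calc (∑ x, a X σ x * g x)^2
            = (∑ x, (a X σ x / Real.sqrt (P x)) * (Real.sqrt (P x) * g x))^2 := by
              rw [Finset.sum_congr rfl fun x _ => hx x]
          _ ≤ (∑ x, (a X σ x / Real.sqrt (P x))^2) * (∑ x, (Real.sqrt (P x) * g x)^2) :=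
              Finset.sum_mul_sq_le_sq_mul_sq _ _ _
          _ = Z X σ * (∑ x, P x * g x ^ 2) := by
              congr 1
              · refine Finset.sum_congr rfl fun x _ => ?_
                rw [div_pow, Real.sq_sqrt (hPpos x).le]
              · refine Finset.sum_congr rfl fun x _ => ?_
                rw [mul_pow, Real.sq_sqrt (hPpos x).le]
          _ ≤ Z X σ * (r / 4) := mul_le_mul_of_nonneg_left hg (hZ0 X σ)
      have h1 : (∑ x, a X σ x * g x) ≤ Real.sqrt (Z X σ * (r/4)) := by
        calc (∑ x, a X σ x * g x) ≤ |∑ x, a X σ x * g x| := le_abs_self _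
          _ = Real.sqrt ((∑ x, a X σ x * g x)^2) := (Real.sqrt_sq_eq_abs _).symm
          _ ≤ Real.sqrt (Z X σ * (r/4)) := Real.sqrt_le_sqrt hsq
      refine h1.trans (le_of_eq ?_)
      rw [Real.sqrt_mul (hZ0 X σ), Real.sqrt_div hr,
        show Real.sqrt 4 = 2 by rw [show (4:ℝ)=2^2 by norm_num, Real.sqrt_sq]; norm_num]
      ring
    · positivity
  -- Step B
  have stepB : (∑ X : Fin m → (Fin n → Bool), ∑ σ : Fin m → Bool,
        ((∏ i, P (X i)) * (1 / 2 ^ m)) *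
          sSup {t : ℝ | ∃ g : (Fin n → Bool) → ℝ,
            (∑ x : Fin n → Bool, P x * g x ^ 2) ≤ r / 4 ∧
            t = (1 / m) * ∑ i, spin (σ i) * g (X i)}) ≤
      (Real.sqrt r / 2) * ∑ X : Fin m → (Fin n → Bool), ∑ σ : Fin m → Bool,
        ((∏ i, P (X i)) * (1 / 2 ^ m)) * Real.sqrt (Z X σ) := by
    calc (∑ X : Fin m → (Fin n → Bool), ∑ σ : Fin m → Bool,
        ((∏ i, P (X i)) * (1 / 2 ^ m)) *
          sSup {t : ℝ | ∃ g : (Fin n → Bool) → ℝ,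
            (∑ x : Fin n → Bool, P x * g x ^ 2) ≤ r / 4 ∧
            t = (1 / m) * ∑ i, spin (σ i) * g (X i)})
        ≤ ∑ X : Fin m → (Fin n → Bool), ∑ σ : Fin m → Bool,
            ((∏ i, P (X i)) * (1 / 2 ^ m)) * ((Real.sqrt r / 2) * Real.sqrt (Z X σ)) := by
          refine Finset.sum_le_sum fun X _ => Finset.sum_le_sum fun σ _ => ?_
          exact mul_le_mul_of_nonneg_left (stepA X σ) (hw0 X)
      _ = (Real.sqrt r / 2) * ∑ X : Fin m → (Fin n → Bool), ∑ σ : Fin m → Bool,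
            ((∏ i, P (X i)) * (1 / 2 ^ m)) * Real.sqrt (Z X σ) := by
          rw [Finset.mul_sum]
          refine Finset.sum_congr rfl fun X _ => ?_
          rw [Finset.mul_sum]
          exact Finset.sum_congr rfl fun σ _ => by ring
  -- total mass
  have hprod1 : ∑ X : Fin m → (Fin n → Bool), ∏ i, P (X i) = 1 := by
    rw [sum_prod_fn m (fun _ y => P y)]
    simp [hsum]
  have hWtot : ∑ X : Fin m → (Fin n → Bool), ∑ _σ : Fin m → Bool,
      ((∏ i, P (X i)) * (1 / 2 ^ m : ℝ)) = 1 := by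
    have h2 : ((2:ℝ)^m) ≠ 0 := by positivity
    calc ∑ X : Fin m → (Fin n → Bool), ∑ _σ : Fin m → Bool,
        ((∏ i, P (X i)) * (1 / 2 ^ m : ℝ))
        = ∑ X : Fin m → (Fin n → Bool), (2:ℝ)^m * ((∏ i, P (X i)) * (1 / 2 ^ m : ℝ)) := by
          refine Finset.sum_congr rfl fun X _ => ?_
          rw [Finset.sum_const, Finset.card_univ]
          simp [Fintype.card_fun, nsmul_eq_mul]
      _ = ∑ X : Fin m → (Fin n → Bool), ∏ i, P (X i) := by
          refine Finset.sum_congr rfl fun X _ => ?_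
          field_simp
      _ = 1 := hprod1
  -- expectation of Z
  set N : (Fin m → (Fin n → Bool)) → (Fin n → Bool) → ℝ :=
    fun X x => ∑ i, (if X i = x then (1:ℝ) else 0) with hN
  have hEZ : ∑ X : Fin m → (Fin n → Bool), ∑ σ : Fin m → Bool,
      ((∏ i, P (X i)) * (1 / 2 ^ m : ℝ)) * Z X σ = 2^n / m := by
    have inner : ∀ X : Fin m → (Fin n → Bool), ∑ σ : Fin m → Bool, (1/2^m : ℝ) * Z X σ
        = (1/(m:ℝ))^2 * ∑ x : Fin n → Bool, N X x / P x := by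
      intro X
      have hax : ∀ x : Fin n → Bool, ∑ σ : Fin m → Bool, (1/2^m : ℝ) * (a X σ x)^2
          = (1/(m:ℝ))^2 * N X x := by
        intro x
        calc ∑ σ : Fin m → Bool, (1/2^m : ℝ) * (a X σ x)^2
            = (1/(m:ℝ))^2 * ∑ σ : Fin m → Bool,
                (1/2^m : ℝ) * (∑ i, spin (σ i) * (if X i = x then (1:ℝ) else 0))^2 := by
              rw [Finset.mul_sum]
              refine Finset.sum_congr rfl fun σ _ => ?_
              simp only [ha]
              ring
          _ = (1/(m:ℝ))^2 * ∑ i, (if X i = x then (1:ℝ) else 0)^2 := by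
              rw [rad_sm m (fun i => if X i = x then (1:ℝ) else 0)]
          _ = (1/(m:ℝ))^2 * N X x := by
              simp only [hN]
              congr 1
              refine Finset.sum_congr rfl fun i _ => ?_
              by_cases hix : X i = x <;> simp [hix]
      calc ∑ σ : Fin m → Bool, (1/2^m : ℝ) * Z X σ
          = ∑ σ : Fin m → Bool, ∑ x : Fin n → Bool, (1/(P x)) * ((1/2^m : ℝ) * (a X σ x)^2) := by
            refine Finset.sum_congr rfl fun σ _ => ?_
            simp only [hZdef]
            rw [Finset.mul_sum]
            exact Finset.sum_congr rfl fun x _ => by field_simp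
        _ = ∑ x : Fin n → Bool, (1/(P x)) * ∑ σ : Fin m → Bool, ((1/2^m : ℝ) * (a X σ x)^2) := by
            rw [Finset.sum_comm]
            exact Finset.sum_congr rfl fun x _ => (Finset.mul_sum _ _ _).symm
        _ = ∑ x : Fin n → Bool, (1/(P x)) * ((1/(m:ℝ))^2 * N X x) := by
            exact Finset.sum_congr rfl fun x _ => by rw [hax x]
        _ = (1/(m:ℝ))^2 * ∑ x : Fin n → Bool, N X x / P x := by
            rw [Finset.mul_sum]
            exact Finset.sum_congr rfl fun x _ => by
              rw [div_eq_mul_inv, div_eq_mul_inv]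
              ring
    have hmarg2 : ∀ x, ∑ X : Fin m → (Fin n → Bool), (∏ j, P (X j)) * N X x = m * P x := by
      intro x
      calc ∑ X : Fin m → (Fin n → Bool), (∏ j, P (X j)) * N X x
          = ∑ X : Fin m → (Fin n → Bool), ∑ i,
              (∏ j, P (X j)) * (if X i = x then (1:ℝ) else 0) := by
            refine Finset.sum_congr rfl fun X _ => ?_
            simp only [hN]
            exact Finset.mul_sum _ _ _
        _ = ∑ i : Fin m, ∑ X : Fin m → (Fin n → Bool),
              (∏ j, P (X j)) * (if X i = x then (1:ℝ) else 0) := Finset.sum_comm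
        _ = ∑ _i : Fin m, P x := Finset.sum_congr rfl fun i _ => marginal m P hsum i x
        _ = m * P x := by
            rw [Finset.sum_const, Finset.card_univ, Fintype.card_fin, nsmul_eq_mul]
    calc ∑ X : Fin m → (Fin n → Bool), ∑ σ : Fin m → Bool,
        ((∏ i, P (X i)) * (1 / 2 ^ m : ℝ)) * Z X σ
        = ∑ X : Fin m → (Fin n → Bool), (∏ i, P (X i)) *
            ∑ σ : Fin m → Bool, (1/2^m : ℝ) * Z X σ := by
          refine Finset.sum_congr rfl fun X _ => ?_
          rw [Finset.mul_sum]
          exact Finset.sum_congr rfl fun σ _ => by ring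
      _ = ∑ X : Fin m → (Fin n → Bool), (∏ i, P (X i)) *
            ((1/(m:ℝ))^2 * ∑ x : Fin n → Bool, N X x / P x) := by
          exact Finset.sum_congr rfl fun X _ => by rw [inner X]
      _ = ∑ x : Fin n → Bool, (1/(m:ℝ))^2 * (1 / P x) *
            ∑ X : Fin m → (Fin n → Bool), (∏ j, P (X j)) * N X x := by
          simp only [Finset.mul_sum]
          rw [Finset.sum_comm]
          refine Finset.sum_congr rfl fun x _ => Finset.sum_congr rfl fun X _ => ?_
          rw [div_eq_mul_inv, div_eq_mul_inv]
          ring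
      _ = ∑ x : Fin n → Bool, (1/(m:ℝ))^2 * (1 / P x) * ((m:ℝ) * P x) := by
          exact Finset.sum_congr rfl fun x _ => by rw [hmarg2 x]
      _ = ∑ _x : Fin n → Bool, (1/(m:ℝ)) := by
          refine Finset.sum_congr rfl fun x _ => ?_
          field_simp [(hPpos x).ne']
      _ = 2^n / m := by
          rw [Finset.sum_const, Finset.card_univ, nsmul_eq_mul]
          simp [Fintype.card_fun]
          ring
  -- Step C : Jensen via Cauchy–Schwarz
  have hTsq : (∑ X : Fin m → (Fin n → Bool), ∑ σ : Fin m → Bool,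
      ((∏ i, P (X i)) * (1 / 2 ^ m : ℝ)) * Real.sqrt (Z X σ))^2 ≤ 2^n / m := by
    have cs := Finset.sum_mul_sq_le_sq_mul_sq
      (Finset.univ : Finset ((Fin m → (Fin n → Bool)) × (Fin m → Bool)))
      (fun p => Real.sqrt ((∏ i, P (p.1 i)) * (1 / 2 ^ m : ℝ)))
      (fun p => Real.sqrt ((∏ i, P (p.1 i)) * (1 / 2 ^ m : ℝ)) * Real.sqrt (Z p.1 p.2))
    have e1 : ∑ p : (Fin m → (Fin n → Bool)) × (Fin m → Bool),
        Real.sqrt ((∏ i, P (p.1 i)) * (1 / 2 ^ m : ℝ)) *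
          (Real.sqrt ((∏ i, P (p.1 i)) * (1 / 2 ^ m : ℝ)) * Real.sqrt (Z p.1 p.2))
        = ∑ X : Fin m → (Fin n → Bool), ∑ σ : Fin m → Bool,
            ((∏ i, P (X i)) * (1 / 2 ^ m : ℝ)) * Real.sqrt (Z X σ) := by
      rw [Fintype.sum_prod_type]
      refine Finset.sum_congr rfl fun X _ => Finset.sum_congr rfl fun σ _ => ?_
      rw [← mul_assoc, Real.mul_self_sqrt (hw0 X)]
    have e2 : ∑ p : (Fin m → (Fin n → Bool)) × (Fin m → Bool),
        (Real.sqrt ((∏ i, P (p.1 i)) * (1 / 2 ^ m : ℝ)))^2 = 1 := by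
      rw [Fintype.sum_prod_type]
      rw [Finset.sum_congr rfl fun X (_ : X ∈ Finset.univ) =>
        Finset.sum_congr rfl fun σ (_ : σ ∈ Finset.univ) => Real.sq_sqrt (hw0 X)]
      exact hWtot
    have e3 : ∑ p : (Fin m → (Fin n → Bool)) × (Fin m → Bool),
        (Real.sqrt ((∏ i, P (p.1 i)) * (1 / 2 ^ m : ℝ)) * Real.sqrt (Z p.1 p.2))^2
        = 2^n / m := by
      rw [Fintype.sum_prod_type]
      rw [Finset.sum_congr rfl fun X (_ : X ∈ Finset.univ) =>
        Finset.sum_congr rfl fun σ (_ : σ ∈ Finset.univ) => by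
          rw [mul_pow, Real.sq_sqrt (hw0 X), Real.sq_sqrt (hZ0 X σ)]]
      exact hEZ
    rw [← e1]
    calc (∑ p : (Fin m → (Fin n → Bool)) × (Fin m → Bool),
        Real.sqrt ((∏ i, P (p.1 i)) * (1 / 2 ^ m : ℝ)) *
          (Real.sqrt ((∏ i, P (p.1 i)) * (1 / 2 ^ m : ℝ)) * Real.sqrt (Z p.1 p.2)))^2
        ≤ (∑ p : (Fin m → (Fin n → Bool)) × (Fin m → Bool),
            (Real.sqrt ((∏ i, P (p.1 i)) * (1 / 2 ^ m : ℝ)))^2) *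
          (∑ p : (Fin m → (Fin n → Bool)) × (Fin m → Bool),
            (Real.sqrt ((∏ i, P (p.1 i)) * (1 / 2 ^ m : ℝ)) * Real.sqrt (Z p.1 p.2))^2) := cs
      _ = 2^n / m := by rw [e2, e3, one_mul]
  have hT0 : 0 ≤ ∑ X : Fin m → (Fin n → Bool), ∑ σ : Fin m → Bool,
      ((∏ i, P (X i)) * (1 / 2 ^ m : ℝ)) * Real.sqrt (Z X σ) :=
    Finset.sum_nonneg fun X _ => Finset.sum_nonneg fun σ _ =>
      mul_nonneg (hw0 X) (Real.sqrt_nonneg _)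
  have hTle : ∑ X : Fin m → (Fin n → Bool), ∑ σ : Fin m → Bool,
      ((∏ i, P (X i)) * (1 / 2 ^ m : ℝ)) * Real.sqrt (Z X σ)
      ≤ Real.sqrt ((2:ℝ)^n / m) := by
    rw [show (∑ X : Fin m → (Fin n → Bool), ∑ σ : Fin m → Bool,
      ((∏ i, P (X i)) * (1 / 2 ^ m : ℝ)) * Real.sqrt (Z X σ))
      = Real.sqrt ((∑ X : Fin m → (Fin n → Bool), ∑ σ : Fin m → Bool,
      ((∏ i, P (X i)) * (1 / 2 ^ m : ℝ)) * Real.sqrt (Z X σ))^2) from (Real.sqrt_sq hT0).symm]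
    exact Real.sqrt_le_sqrt hTsq
  -- Finish
  have hfinal : (Real.sqrt r / 2) * Real.sqrt ((2:ℝ)^n / m)
      ≤ (2 : ℝ) ^ ((n : ℝ) / 2) * Real.sqrt r / (2 * Real.sqrt (γ * m)) := by
    have h2n : (2 : ℝ) ^ ((n : ℝ) / 2) = Real.sqrt ((2:ℝ)^n) := by
      rw [Real.sqrt_eq_rpow, ← Real.rpow_natCast 2 n, ← Real.rpow_mul (by norm_num : (0:ℝ) ≤ 2)]
      congr 1
      ring
    rw [h2n, Real.sqrt_div (by positivity) (m:ℝ)]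
    rw [show Real.sqrt r / 2 * (Real.sqrt ((2:ℝ)^n) / Real.sqrt (m:ℝ))
      = Real.sqrt ((2:ℝ)^n) * Real.sqrt r / (2 * Real.sqrt (m:ℝ)) by ring]
    gcongr
    nlinarith
  calc (∑ X : Fin m → (Fin n → Bool), ∑ σ : Fin m → Bool,
        ((∏ i, P (X i)) * (1 / 2 ^ m)) *
          sSup {t : ℝ | ∃ g : (Fin n → Bool) → ℝ,
            (∑ x : Fin n → Bool, P x * g x ^ 2) ≤ r / 4 ∧
            t = (1 / m) * ∑ i, spin (σ i) * g (X i)})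
      ≤ (Real.sqrt r / 2) * ∑ X : Fin m → (Fin n → Bool), ∑ σ : Fin m → Bool,
          ((∏ i, P (X i)) * (1 / 2 ^ m)) * Real.sqrt (Z X σ) := stepB
    _ ≤ (Real.sqrt r / 2) * Real.sqrt ((2:ℝ)^n / m) :=
        mul_le_mul_of_nonneg_left hTle (by positivity)
    _ ≤ (2 : ℝ) ^ ((n : ℝ) / 2) * Real.sqrt r / (2 * Real.sqrt (γ * m)) := hfinal
end
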